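/- Let n₀ ∈ ℕ and 0 < α < 1. For any finite sequence of measurable sets E₁, …, E_l ⊆ T² with |E_k| > 4π²α for each k, there exist natural numbers n₀ < n₁ < n₂ < ⋯ < n_l such that |⋃_{k=1}^l E_k(n_k)| > 4π²(1 − (1−α)^l). -/

import Mathlib

open MeasureTheory Real Filter

noncomputable section

instance : Fact (0 < 2 * π) := ⟨by positivity⟩

/-- The two-dimensional torus `(ℝ/2πℤ)²`. -/
abbrev T2 := AddCircle (2 * π) × AddCircle (2 * π)

/-- The dilation map `(x,y) ↦ (nx, ny)` on the torus. -/
def dil (n : ℕ) (p : T2) : T2 := (n • p.1, n • p.2)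

namespace Torus2

open AddCircle Complex Submodule Set
open scoped ComplexConjugate

abbrev T : ℝ := 2 * π

/-- normalized Haar (probability) measure on the 2-torus -/
def μ2 : Measure T2 := (haarAddCircle : Measure (AddCircle T)).prod haarAddCircle

instance : IsProbabilityMeasure μ2 := by unfold μ2; infer_instance

/-- characters on the 2-torus -/
def e2 (m : ℤ × ℤ) : C(T2, ℂ) :=
  ((fourier m.1).comp ⟨Prod.fst, continuous_fst⟩) *
    ((fourier m.2).comp ⟨Prod.snd, continuous_snd⟩)

lemma e2_apply (m : ℤ × ℤ) (p : T2) : e2 m p = fourier m.1 p.1 * fourier m.2 p.2 := rfl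

lemma e2_zero (p : T2) : e2 0 p = 1 := by
  simp [e2_apply, fourier_zero]

lemma e2_add (m m' : ℤ × ℤ) (p : T2) : e2 (m + m') p = e2 m p * e2 m' p := by
  simp only [e2_apply, Prod.fst_add, Prod.snd_add, fourier_add]
  ring

lemma e2_conj (m : ℤ × ℤ) (p : T2) : conj (e2 m p) = e2 (-m) p := by
  simp only [e2_apply, map_mul, ← fourier_neg, Prod.fst_neg, Prod.snd_neg]

lemma fourier_nsmul (j : ℤ) (n : ℕ) (x : AddCircle T) :
    fourier j (n • x) = fourier (j * n) x := by
  rw [fourier_apply, fourier_apply, ← natCast_zsmul x (n := n), smul_smul]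

lemma e2_dil (m : ℤ × ℤ) (n : ℕ) (p : T2) : e2 m (dil n p) = e2 (n • m) p := by
  simp only [e2_apply, dil, fourier_nsmul, Prod.smul_fst, Prod.smul_snd, smul_eq_mul]
  norm_num [mul_comm]

lemma integral_fourier (j : ℤ) :
    ∫ x : AddCircle T, fourier j x ∂haarAddCircle = if j = 0 then 1 else 0 := by
  split_ifs with h
  · subst h
    have : ⇑(fourier (T := T) 0) = (fun _ => 1) := by ext1 x; exact fourier_zero
    rw [this, integral_const, probReal_univ, one_smul]
  · exact integral_eq_zero_of_add_right_eq_neg (μ := haarAddCircle)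
      (fourier_add_half_inv_index h (by positivity))

lemma integral_e2 (m : ℤ × ℤ) : ∫ p, e2 m p ∂μ2 = if m = 0 then 1 else 0 := by
  have : ∫ p, e2 m p ∂μ2 =
      (∫ x : AddCircle T, fourier m.1 x ∂haarAddCircle) *
        (∫ y : AddCircle T, fourier m.2 y ∂haarAddCircle) := by
    simp only [e2_apply]
    exact integral_prod_mul (μ := (haarAddCircle : Measure (AddCircle T)))
      (ν := (haarAddCircle : Measure (AddCircle T))) (fun x => fourier m.1 x)
      (fun y => fourier m.2 y)
  rw [this, integral_fourier, integral_fourier]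
  rcases eq_or_ne m 0 with h | h
  · simp [h]
  · have : m.1 ≠ 0 ∨ m.2 ≠ 0 := by
      by_contra hc
      push_neg at hc
      exact h (Prod.ext hc.1 hc.2)
    rcases this with h1 | h2
    · simp [h, h1]
    · simp [h, h2]

end Torus2

namespace Torus2
open AddCircle Complex Submodule Set ContinuousMap
open scoped ComplexConjugate

/-- characters as elements of L² -/
def e2Lp (m : ℤ × ℤ) : Lp ℂ 2 μ2 := ContinuousMap.toLp (E := ℂ) 2 μ2 ℂ (e2 m)

lemma coeFn_e2Lp (m : ℤ × ℤ) : e2Lp m =ᵐ[μ2] e2 m :=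
  ContinuousMap.coeFn_toLp μ2 (e2 m)

lemma orthonormal_e2 : Orthonormal ℂ e2Lp := by
  rw [orthonormal_iff_ite]
  intro i j
  rw [e2Lp, e2Lp, ContinuousMap.inner_toLp μ2 (e2 i) (e2 j)]
  have : ∀ p : T2, e2 j p * conj (e2 i p) = e2 (-i + j) p := fun p => by
    rw [e2_conj, mul_comm, ← e2_add]
  simp_rw [this]
  rw [integral_e2]
  rcases eq_or_ne i j with h | h
  · simp [h]
  · have : -i + j ≠ 0 := by
      simpa [neg_add_eq_zero] using h
    simp [h, this]

/-- The star subalgebra generated by the characters. -/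
def e2Subalgebra : StarSubalgebra ℂ C(T2, ℂ) where
  toSubalgebra := Algebra.adjoin ℂ (range e2)
  star_mem' := by
    show Algebra.adjoin ℂ (range e2) ≤ star (Algebra.adjoin ℂ (range e2))
    refine Algebra.adjoin_le ?_
    rintro - ⟨m, rfl⟩
    refine Algebra.subset_adjoin ⟨-m, ?_⟩
    ext1 p
    show e2 (-m) p = conj (e2 m p)
    rw [e2_conj]

lemma e2Subalgebra_coe :
    Subalgebra.toSubmodule e2Subalgebra.toSubalgebra = span ℂ (range e2) := by
  apply Algebra.adjoin_eq_span_of_subset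
  refine Subset.trans ?_ Submodule.subset_span
  intro x hx
  refine Submonoid.closure_induction (fun _ => id) ⟨0, ?_⟩ ?_ hx
  · ext1 p; exact e2_zero p
  · rintro - - - - ⟨m, rfl⟩ ⟨m', rfl⟩
    refine ⟨m + m', ?_⟩
    ext1 p
    exact e2_add m m' p

lemma e2Subalgebra_separatesPoints : e2Subalgebra.SeparatesPoints := by
  intro p q hpq
  have h : p.1 ≠ q.1 ∨ p.2 ≠ q.2 := by
    by_contra hc; push_neg at hc; exact hpq (Prod.ext hc.1 hc.2)
  have hT : (0:ℝ) < T := by positivity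
  rcases h with h | h
  · refine ⟨_, ⟨e2 (1, 0), Algebra.subset_adjoin ⟨(1,0), rfl⟩, rfl⟩, ?_⟩
    dsimp only
    simp only [e2_apply, fourier_one, fourier_zero, mul_one]
    contrapose! h
    rw [Circle.coe_inj] at h
    exact injective_toCircle hT.ne' h
  · refine ⟨_, ⟨e2 (0, 1), Algebra.subset_adjoin ⟨(0,1), rfl⟩, rfl⟩, ?_⟩
    dsimp only
    simp only [e2_apply, fourier_one, fourier_zero, one_mul]
    contrapose! h
    rw [Circle.coe_inj] at h
    exact injective_toCircle hT.ne' h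

end Torus2

namespace Torus2
open AddCircle Complex Submodule Set
open scoped ComplexConjugate ENNReal

lemma e2Subalgebra_closure_eq_top : e2Subalgebra.topologicalClosure = ⊤ :=
  ContinuousMap.starSubalgebra_topologicalClosure_eq_top_of_separatesPoints e2Subalgebra
    e2Subalgebra_separatesPoints

lemma span_e2_closure_eq_top : (span ℂ (range e2)).topologicalClosure = ⊤ := by
  rw [← e2Subalgebra_coe]
  exact congr_arg (Subalgebra.toSubmodule <| StarSubalgebra.toSubalgebra ·)
    e2Subalgebra_closure_eq_top

lemma span_e2Lp_closure_eq_top :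
    (span ℂ (range e2Lp)).topologicalClosure = ⊤ := by
  convert (ContinuousMap.toLp_denseRange ℂ μ2 ℂ
      (by norm_num : (2:ℝ≥0∞) ≠ ∞)).topologicalClosure_map_submodule span_e2_closure_eq_top
  · rfl
  erw [map_span, range_comp]
  simp only [ContinuousLinearMap.coe_coe]

end Torus2

namespace Torus2
open AddCircle Complex Submodule Set MeasureTheory.Measure
open scoped ComplexConjugate ENNReal Topology

lemma measurePreserving_dil {n : ℕ} (hn : n ≠ 0) : MeasurePreserving (dil n) μ2 μ2 := by
  have h1 : MeasurePreserving (fun x : AddCircle T => n • x) haarAddCircle haarAddCircle := by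
    have h := measurePreserving_zsmul (haarAddCircle : Measure (AddCircle T))
      (n := (n : ℤ)) (by exact_mod_cast hn)
    have : (fun x : AddCircle T => (n : ℤ) • x) = fun x : AddCircle T => n • x := by
      funext x; exact natCast_zsmul x n
    rwa [this] at h
  have h2 := h1.prod h1
  have : Prod.map (fun x : AddCircle T => n • x) (fun x : AddCircle T => n • x) = dil n := by
    funext p; rfl
  rwa [this] at h2

lemma compLp_e2Lp {n : ℕ} (hn : n ≠ 0) (m : ℤ × ℤ) :
    Lp.compMeasurePreserving (dil n) (measurePreserving_dil hn) (e2Lp m) = e2Lp (n • m) := by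
  apply Lp.ext
  have h1 := Lp.coeFn_compMeasurePreserving (e2Lp m) (measurePreserving_dil hn)
  have h2 : (e2Lp m : T2 → ℂ) ∘ dil n =ᵐ[μ2] ⇑(e2 m) ∘ dil n :=
    (measurePreserving_dil hn).quasiMeasurePreserving.ae_eq_comp (coeFn_e2Lp m)
  refine h1.trans (h2.trans ?_)
  refine EventuallyEq.trans ?_ (coeFn_e2Lp (n • m)).symm
  apply Eventually.of_forall
  intro p
  exact e2_dil m n p

/-- Riemann-Lebesgue from Bessel -/
lemma tendsto_inner_e2Lp_cofinite (F : Lp ℂ 2 μ2) :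
    Tendsto (fun m : ℤ × ℤ => (inner ℂ (e2Lp m) F : ℂ)) cofinite (𝓝 0) := by
  have hsum : Summable fun m : ℤ × ℤ => ‖(inner ℂ (e2Lp m) F : ℂ)‖ ^ 2 :=
    orthonormal_e2.inner_products_summable F
  have h0 : Tendsto (fun m : ℤ × ℤ => ‖(inner ℂ (e2Lp m) F : ℂ)‖ ^ 2) cofinite (𝓝 0) :=
    hsum.tendsto_cofinite_zero
  rw [tendsto_zero_iff_norm_tendsto_zero]
  have hs : Tendsto (fun m : ℤ × ℤ => Real.sqrt (‖(inner ℂ (e2Lp m) F : ℂ)‖ ^ 2)) cofinite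
      (𝓝 (Real.sqrt 0)) := (Real.continuous_sqrt.tendsto 0).comp h0
  simpa [Real.sqrt_sq (norm_nonneg _)] using hs

end Torus2

namespace Torus2
open AddCircle Complex Submodule Set MeasureTheory.Measure
open scoped ComplexConjugate ENNReal Topology

lemma inner_e2Lp_e2Lp (i j : ℤ × ℤ) :
    (inner ℂ (e2Lp i) (e2Lp j) : ℂ) = if i = j then 1 else 0 :=
  orthonormal_iff_ite.mp orthonormal_e2 i j

lemma tendsto_inner_V_e2Lp (F : Lp ℂ 2 μ2) (m : ℤ × ℤ) :
    Tendsto (fun n : ℕ => (inner ℂ F (e2Lp ((n + 1) • m)) : ℂ)) atTop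
      (𝓝 ((inner ℂ F (e2Lp 0) : ℂ) * (inner ℂ (e2Lp 0) (e2Lp m) : ℂ))) := by
  rcases eq_or_ne m 0 with rfl | hm
  · simpa [inner_e2Lp_e2Lp, orthonormal_e2.1 0] using
      (tendsto_const_nhds : Tendsto (fun _ : ℕ => (inner ℂ F (e2Lp 0) : ℂ)) atTop _)
  · rw [inner_e2Lp_e2Lp, if_neg (by simpa using hm.symm), mul_zero]
    have hRL : Tendsto (fun k : ℤ × ℤ => (inner ℂ F (e2Lp k) : ℂ)) cofinite (𝓝 0) := by
      have h := (Complex.continuous_conj.tendsto (0 : ℂ)).comp (tendsto_inner_e2Lp_cofinite F)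
      simpa [Function.comp_def, inner_conj_symm] using h
    have hinj : Function.Injective (fun n : ℕ => (n + 1) • m) := by
      intro a b hab
      have h1 : ((a + 1 : ℕ) : ℤ) * m.1 = ((b + 1 : ℕ) : ℤ) * m.1 := by
        have := congrArg Prod.fst hab
        simpa [nsmul_eq_mul] using this
      have h2 : ((a + 1 : ℕ) : ℤ) * m.2 = ((b + 1 : ℕ) : ℤ) * m.2 := by
        have := congrArg Prod.snd hab
        simpa [nsmul_eq_mul] using this
      have hm' : m.1 ≠ 0 ∨ m.2 ≠ 0 := by
        by_contra hc; push_neg at hc; exact hm (Prod.ext hc.1 hc.2)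
      have : ((a + 1 : ℕ) : ℤ) = ((b + 1 : ℕ) : ℤ) := by
        rcases hm' with h | h
        · exact mul_right_cancel₀ h h1
        · exact mul_right_cancel₀ h h2
      exact_mod_cast Nat.succ_injective (by exact_mod_cast this)
    have htend : Tendsto (fun n : ℕ => (n + 1) • m) atTop cofinite := by
      rw [← Nat.cofinite_eq_atTop]
      exact hinj.tendsto_cofinite
    exact hRL.comp htend

lemma compMeasurePreserving_smul {f : T2 → T2} (hf : MeasurePreserving f μ2 μ2) (c : ℂ)
    (g : Lp ℂ 2 μ2) :
    Lp.compMeasurePreserving f hf (c • g) = c • Lp.compMeasurePreserving f hf g :=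
  map_smul (Lp.compMeasurePreservingₗ ℂ f hf) c g

lemma tendsto_inner_V_span (F : Lp ℂ 2 μ2) (P : Lp ℂ 2 μ2) (hP : P ∈ span ℂ (range e2Lp)) :
    Tendsto (fun n : ℕ => (inner ℂ F
        (Lp.compMeasurePreserving (dil (n + 1)) (measurePreserving_dil n.succ_ne_zero) P) : ℂ))
      atTop (𝓝 ((inner ℂ F (e2Lp 0) : ℂ) * (inner ℂ (e2Lp 0) P : ℂ))) := by
  induction hP using span_induction with
  | mem x hx =>
      obtain ⟨m, rfl⟩ := hx
      simpa [compLp_e2Lp] using tendsto_inner_V_e2Lp F m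
  | zero => simpa using (tendsto_const_nhds : Tendsto (fun _ : ℕ => (0:ℂ)) atTop _)
  | add x y hx hy ihx ihy =>
      simpa [map_add, inner_add_right, mul_add] using ihx.add ihy
  | smul c x hx ih =>
      simp only [compMeasurePreserving_smul, inner_smul_right]
      have := ih.const_mul c
      convert this using 2
      ring

end Torus2

namespace Torus2
open AddCircle Complex Submodule Set MeasureTheory.Measure
open scoped ComplexConjugate ENNReal Topology

lemma norm_e2Lp_zero : ‖e2Lp 0‖ = 1 := orthonormal_e2.1 0

lemma tendsto_inner_V (F G : Lp ℂ 2 μ2) :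
    Tendsto (fun n : ℕ => (inner ℂ F
        (Lp.compMeasurePreserving (dil (n + 1)) (measurePreserving_dil n.succ_ne_zero) G) : ℂ))
      atTop (𝓝 ((inner ℂ F (e2Lp 0) : ℂ) * (inner ℂ (e2Lp 0) G : ℂ))) := by
  rw [Metric.tendsto_atTop]
  intro ε hε
  set δ : ℝ := ε / (2 * ‖F‖ + 2) with hδdef
  have hd0 : (0:ℝ) < 2 * ‖F‖ + 2 := by positivity
  have hδ : 0 < δ := by positivity
  have hdense : G ∈ closure ((span ℂ (range e2Lp)) : Set (Lp ℂ 2 μ2)) := by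
    rw [← Submodule.topologicalClosure_coe, span_e2Lp_closure_eq_top]
    trivial
  obtain ⟨P, hPmem, hPd⟩ := Metric.mem_closure_iff.mp hdense δ hδ
  have hlim := tendsto_inner_V_span F P hPmem
  rw [Metric.tendsto_atTop] at hlim
  obtain ⟨N, hN⟩ := hlim δ hδ
  refine ⟨N, fun n hn => ?_⟩
  have hGP : ‖G - P‖ < δ := by rwa [← dist_eq_norm]
  set Vn := Lp.compMeasurePreserving (E := ℂ) (p := 2) (dil (n + 1))
    (measurePreserving_dil n.succ_ne_zero) with hVn
  have h1 : dist (inner ℂ F (Vn G) : ℂ) (inner ℂ F (Vn P) : ℂ) ≤ ‖F‖ * δ := by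
    rw [dist_eq_norm, ← inner_sub_right, ← map_sub]
    calc ‖(inner ℂ F (Vn (G - P)) : ℂ)‖ ≤ ‖F‖ * ‖Vn (G - P)‖ := norm_inner_le_norm _ _
      _ = ‖F‖ * ‖G - P‖ := by
          rw [hVn, Lp.norm_compMeasurePreserving (G - P) (measurePreserving_dil n.succ_ne_zero)]
      _ ≤ ‖F‖ * δ := by gcongr
  have h2 : dist (inner ℂ F (Vn P) : ℂ)
      ((inner ℂ F (e2Lp 0) : ℂ) * (inner ℂ (e2Lp 0) P : ℂ)) < δ := hN n hn
  have h3 : dist ((inner ℂ F (e2Lp 0) : ℂ) * (inner ℂ (e2Lp 0) P : ℂ))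
      ((inner ℂ F (e2Lp 0) : ℂ) * (inner ℂ (e2Lp 0) G : ℂ)) ≤ ‖F‖ * δ := by
    rw [dist_eq_norm, ← mul_sub, ← inner_sub_right, norm_mul]
    calc ‖(inner ℂ F (e2Lp 0) : ℂ)‖ * ‖(inner ℂ (e2Lp 0) (P - G) : ℂ)‖
        ≤ (‖F‖ * ‖e2Lp 0‖) * (‖e2Lp 0‖ * ‖P - G‖) := by
          gcongr <;> exact norm_inner_le_norm _ _
      _ = ‖F‖ * ‖G - P‖ := by rw [norm_e2Lp_zero, norm_sub_rev]; ring
      _ ≤ ‖F‖ * δ := by gcongr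
  have := (dist_triangle4 (inner ℂ F (Vn G) : ℂ) (inner ℂ F (Vn P) : ℂ)
      ((inner ℂ F (e2Lp 0) : ℂ) * (inner ℂ (e2Lp 0) P : ℂ))
      ((inner ℂ F (e2Lp 0) : ℂ) * (inner ℂ (e2Lp 0) G : ℂ)))
  have hsum : ‖F‖ * δ + δ + ‖F‖ * δ < ε := by
    have : (2 * ‖F‖ + 2) * δ = ε := by
      rw [hδdef, mul_div_cancel₀ _ hd0.ne']
    nlinarith [norm_nonneg F]
  linarith

end Torus2

namespace Torus2
open AddCircle Complex Submodule Set MeasureTheory.Measure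
open scoped ComplexConjugate ENNReal Topology

lemma inner_indicator_right (A : Set T2) (hA : MeasurableSet A) (F : Lp ℂ 2 μ2) :
    (inner ℂ (indicatorConstLp 2 hA (measure_ne_top μ2 A) (1:ℂ)) F : ℂ) = ∫ x in A, F x ∂μ2 :=
  L2.inner_indicatorConstLp_one hA (measure_ne_top μ2 A) F

lemma inner_indicator_indicator {A C : Set T2} (hA : MeasurableSet A) (hC : MeasurableSet C)
    (h : μ2 C ≠ ⊤) :
    (inner ℂ (indicatorConstLp 2 hA (measure_ne_top μ2 A) (1:ℂ))
        (indicatorConstLp 2 hC h (1:ℂ)) : ℂ) = ((μ2 (A ∩ C)).toReal : ℂ) := by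
  rw [inner_indicator_right A hA]
  have h1 : ∀ᵐ x ∂(μ2.restrict A), (indicatorConstLp 2 hC h (1:ℂ)) x
      = C.indicator (fun _ => (1:ℂ)) x := ae_restrict_of_ae (indicatorConstLp_coeFn)
  rw [integral_congr_ae h1]
  rw [setIntegral_indicator hC, setIntegral_const]
  simp [measureReal_def]

lemma inner_indicator_e2Lp_zero (A : Set T2) (hA : MeasurableSet A) :
    (inner ℂ (indicatorConstLp 2 hA (measure_ne_top μ2 A) (1:ℂ)) (e2Lp 0) : ℂ)
      = ((μ2 A).toReal : ℂ) := by
  rw [inner_indicator_right A hA]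
  have h1 : ∀ᵐ x ∂(μ2.restrict A), (e2Lp 0) x = 1 := by
    refine ae_restrict_of_ae ((coeFn_e2Lp 0).mono fun x hx => ?_)
    rw [hx, e2_zero]
  rw [integral_congr_ae h1, setIntegral_const]
  simp [measureReal_def]

lemma mixing {A B : Set T2} (hA : MeasurableSet A) (hB : MeasurableSet B) :
    Tendsto (fun n : ℕ => (μ2 (A ∩ dil n ⁻¹' B)).toReal) atTop
      (𝓝 ((μ2 A).toReal * (μ2 B).toReal)) := by
  set fA : Lp ℂ 2 μ2 := indicatorConstLp 2 hA (measure_ne_top μ2 A) (1:ℂ) with hfA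
  set gB : Lp ℂ 2 μ2 := indicatorConstLp 2 hB (measure_ne_top μ2 B) (1:ℂ) with hgB
  have hIdent : ∀ n : ℕ,
      (inner ℂ fA (Lp.compMeasurePreserving (dil (n+1)) (measurePreserving_dil n.succ_ne_zero) gB)
        : ℂ) = ((μ2 (A ∩ dil (n+1) ⁻¹' B)).toReal : ℂ) := by
    intro n
    rw [hgB, Lp.indicatorConstLp_compMeasurePreserving hB (measure_ne_top μ2 B) 1
      (measurePreserving_dil n.succ_ne_zero)]
    exact inner_indicator_indicator hA
      (hB.preimage (measurePreserving_dil n.succ_ne_zero).measurable) _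
  have h0B : (inner ℂ (e2Lp 0) gB : ℂ) = ((μ2 B).toReal : ℂ) := by
    rw [← inner_conj_symm, hgB, inner_indicator_e2Lp_zero B hB, Complex.conj_ofReal]
  have htend := tendsto_inner_V fA gB
  rw [hfA] at htend
  rw [inner_indicator_e2Lp_zero A hA] at htend
  rw [← hfA] at htend
  rw [h0B] at htend
  have htend2 : Tendsto (fun n : ℕ => ((μ2 (A ∩ dil (n+1) ⁻¹' B)).toReal : ℂ)) atTop
      (𝓝 (((μ2 A).toReal : ℂ) * ((μ2 B).toReal : ℂ))) := by
    refine htend.congr fun n => ?_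
    exact hIdent n
  have htend3 : Tendsto (fun n : ℕ => (μ2 (A ∩ dil (n+1) ⁻¹' B)).toReal) atTop
      (𝓝 ((μ2 A).toReal * (μ2 B).toReal)) := by
    have := (Complex.continuous_re.tendsto _).comp htend2
    simpa [Function.comp_def, ← Complex.ofReal_mul] using this
  exact (tendsto_add_atTop_iff_nat 1).mp htend3

end Torus2

namespace Torus2
open AddCircle Complex Submodule Set MeasureTheory.Measure
open scoped ComplexConjugate ENNReal Topology

lemma volume_eq_smul_μ2 : (volume : Measure T2) = (ENNReal.ofReal T * ENNReal.ofReal T) • μ2 := by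
  rw [Measure.volume_eq_prod]
  refine Measure.prod_eq fun s t hs ht => ?_
  rw [Measure.smul_apply, μ2, Measure.prod_prod,
    AddCircle.volume_eq_smul_haarAddCircle (T := T), Measure.smul_apply, Measure.smul_apply,
    smul_eq_mul, smul_eq_mul, smul_eq_mul]
  ring

lemma vol_toReal (S : Set T2) : (volume S).toReal = (4 * π ^ 2) * (μ2 S).toReal := by
  have hT : (0:ℝ) ≤ T := by positivity
  rw [volume_eq_smul_μ2, Measure.smul_apply, smul_eq_mul, ENNReal.toReal_mul,
    ENNReal.toReal_mul, ENNReal.toReal_ofReal hT]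
  show T * T * (μ2 S).toReal = 4 * π ^ 2 * (μ2 S).toReal
  ring_nf

lemma key (α : ℝ) (hα1 : α < 1) :
    ∀ (l : ℕ) (n₀ : ℕ) (E : Fin (l+1) → Set T2), (∀ k, MeasurableSet (E k)) →
      (∀ k, (μ2 (E k)).toReal > α) →
      ∃ n : Fin (l+1) → ℕ, StrictMono n ∧ (∀ k, n₀ < n k) ∧
        (μ2 (⋃ k, dil (n k) ⁻¹' E k)).toReal > 1 - (1-α)^(l+1) := by
  intro l
  induction l with
  | zero =>
    intro n₀ E hE hm
    refine ⟨fun _ => n₀ + 1, ?_, fun k => Nat.lt_succ_self n₀, ?_⟩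
    · intro a b hab
      simp only [Fin.lt_iff_val_lt_val] at hab
      omega
    · have hU : (⋃ k : Fin 1, dil (n₀+1) ⁻¹' E k) = dil (n₀+1) ⁻¹' E 0 := by
        ext p; simp [Fin.exists_fin_one]
      rw [hU, (measurePreserving_dil (Nat.succ_ne_zero n₀)).measure_preimage
        (hE 0).nullMeasurableSet]
      simpa using hm 0
  | succ l ih =>
    intro n₀ E hE hm
    obtain ⟨n, hmono, hgt, hS⟩ := ih n₀ (fun k => E k.castSucc) (fun k => hE _) (fun k => hm _)
    set S := ⋃ k : Fin (l+1), dil (n k) ⁻¹' E k.castSucc with hSdef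
    have hkne : ∀ k : Fin (l+1), n k ≠ 0 := fun k =>
      (Nat.lt_of_le_of_lt (Nat.zero_le n₀) (hgt k)).ne'
    have hSmeas : MeasurableSet S :=
      MeasurableSet.iUnion fun k => (hE _).preimage (measurePreserving_dil (hkne k)).measurable
    have hprob : ∀ (X : Set T2), MeasurableSet X → (μ2 Xᶜ).toReal = 1 - (μ2 X).toReal := by
      intro X hX
      rw [measure_compl hX (measure_ne_top _ _), measure_univ,
        ENNReal.toReal_sub_of_le prob_le_one ENNReal.one_ne_top, ENNReal.toReal_one]
    have hScompl : (μ2 Sᶜ).toReal < (1-α)^(l+1) := by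
      rw [hprob S hSmeas]; linarith [hS]
    have hBcompl : (μ2 (E (Fin.last (l+1)))ᶜ).toReal < 1 - α := by
      rw [hprob _ (hE _)]; linarith [hm (Fin.last (l+1))]
    have hlt : (μ2 Sᶜ).toReal * (μ2 (E (Fin.last (l+1)))ᶜ).toReal < (1-α)^(l+2) := by
      have h1 : (0:ℝ) ≤ (μ2 Sᶜ).toReal := ENNReal.toReal_nonneg
      have h2 : (0:ℝ) ≤ (μ2 (E (Fin.last (l+1)))ᶜ).toReal := ENNReal.toReal_nonneg
      have h3 : (0:ℝ) < (1-α)^(l+1) := pow_pos (by linarith) _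
      calc (μ2 Sᶜ).toReal * (μ2 (E (Fin.last (l+1)))ᶜ).toReal
          < (1-α)^(l+1) * (1-α) := by
            rcases eq_or_lt_of_le h2 with h | h
            · rw [← h, mul_zero]
              exact mul_pos h3 (by linarith)
            · exact mul_lt_mul'' hScompl hBcompl h1 h2
        _ = (1-α)^(l+2) := by rw [← pow_succ]
    have hev := (mixing hSmeas.compl (hE (Fin.last (l+1))).compl).eventually_lt_const hlt
    obtain ⟨m, hm1, hm2⟩ := ((eventually_gt_atTop (n (Fin.last l))).and hev).exists
    have hmne : m ≠ 0 := (Nat.lt_of_le_of_lt (Nat.zero_le _) hm1).ne'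
    refine ⟨Fin.snoc n m, ?_, ?_, ?_⟩
    · intro a b hab
      induction b using Fin.lastCases with
      | last =>
        induction a using Fin.lastCases with
        | last => exact absurd hab (lt_irrefl _)
        | cast a' =>
          rw [Fin.snoc_castSucc, Fin.snoc_last]
          exact lt_of_le_of_lt (hmono.monotone (Fin.le_last a')) hm1
      | cast b' =>
        induction a using Fin.lastCases with
        | last => exact absurd hab ((Fin.le_last _).not_gt)
        | cast a' =>
          rw [Fin.snoc_castSucc, Fin.snoc_castSucc]
          exact hmono (Fin.castSucc_lt_castSucc_iff.mp hab)
    · intro k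
      rcases Fin.eq_castSucc_or_eq_last k with ⟨k', rfl⟩ | rfl
      · rw [Fin.snoc_castSucc]; exact hgt k'
      · rw [Fin.snoc_last]; exact lt_trans (hgt (Fin.last l)) hm1
    · have hU : (⋃ k : Fin (l+2), dil ((Fin.snoc n m : Fin (l+2) → ℕ) k) ⁻¹' E k)
          = S ∪ dil m ⁻¹' E (Fin.last (l+1)) := by
        ext p
        constructor
        · intro hp
          obtain ⟨k, hk⟩ := mem_iUnion.mp hp
          rcases Fin.eq_castSucc_or_eq_last k with ⟨k', rfl⟩ | rfl
          · rw [Fin.snoc_castSucc] at hk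
            exact Set.mem_union_left _ (mem_iUnion.mpr ⟨k', hk⟩)
          · rw [Fin.snoc_last] at hk
            exact Set.mem_union_right _ hk
        · intro hp
          rcases hp with hp | hp
          · obtain ⟨k', hk'⟩ := mem_iUnion.mp hp
            exact mem_iUnion.mpr ⟨k'.castSucc, by rwa [Fin.snoc_castSucc]⟩
          · exact mem_iUnion.mpr ⟨Fin.last (l+1), by rwa [Fin.snoc_last]⟩
      have hXmeas : MeasurableSet (dil m ⁻¹' E (Fin.last (l+1))) :=
        (hE _).preimage (measurePreserving_dil hmne).measurable
      rw [hU]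
      have hc := hprob _ (hSmeas.union hXmeas)
      rw [Set.compl_union, ← Set.preimage_compl] at hc
      rw [show (μ2 (S ∪ dil m ⁻¹' E (Fin.last (l+1)))).toReal
          = 1 - (μ2 (Sᶜ ∩ dil m ⁻¹' (E (Fin.last (l+1)))ᶜ)).toReal by linarith]
      linarith [hm2]

end Torus2

/-- Given sets `E₁,…,E_l ⊆ T²` with `|E_k| > 4π²α`, there exist
`n₀ < n₁ < ⋯ < n_l` with `|⋃ E_k(n_k)| > 4π²(1-(1-α)^l)`. -/
theorem stmt3 (n₀ : ℕ) (α : ℝ) (hα0 : 0 < α) (hα1 : α < 1) (l : ℕ) (hl : 0 < l)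
    (E : Fin l → Set T2) (hE : ∀ k, MeasurableSet (E k))
    (hmeas : ∀ k, (volume (E k)).toReal > 4 * π ^ 2 * α) :
    ∃ n : Fin l → ℕ, StrictMono n ∧ (∀ k, n₀ < n k) ∧
      (volume (⋃ k, dil (n k) ⁻¹' E k)).toReal > 4 * π ^ 2 * (1 - (1 - α) ^ l) := by
  obtain ⟨l', rfl⟩ := Nat.exists_eq_succ_of_ne_zero hl.ne'
  have hπ : (0:ℝ) < 4 * π ^ 2 := by positivity
  have hμ : ∀ k, (Torus2.μ2 (E k)).toReal > α := by
    intro k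
    have h := hmeas k
    rw [Torus2.vol_toReal] at h
    exact (mul_lt_mul_iff_right₀ hπ).mp h
  obtain ⟨n, h1, h2, h3⟩ := Torus2.key α hα1 l' n₀ E hE hμ
  exact ⟨n, h1, h2, by rw [Torus2.vol_toReal]; exact (mul_lt_mul_iff_right₀ hπ).mpr h3⟩
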